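/- For the second-order flow on Nil, the ratio B/C is constant along the flow: if A, B, C are positive differentiable functions satisfying B' = 4A/C - 20α'A²/(BC²) and C' = 4A/B - 20α'A²/(B²C), then d(B/C)/dt = 0. -/

import Mathlib

theorem nil_ratio_constant (α' : ℝ) (A B C : ℝ → ℝ)
    (hApos : ∀ t, 0 < A t) (hBpos : ∀ t, 0 < B t) (hCpos : ∀ t, 0 < C t)
    (hB : ∀ t, HasDerivAt B (4*(A t)/(C t) - 20*α'*(A t)^2/((B t)*(C t)^2)) t)
    (hC : ∀ t, HasDerivAt C (4*(A t)/(B t) - 20*α'*(A t)^2/((B t)^2*(C t))) t) :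
    ∀ t, HasDerivAt (fun s => B s / C s) 0 t := by
  intro t
  have hBne := (hBpos t).ne'
  have hCne := (hCpos t).ne'
  have h := (hB t).div (hC t) hCne
  convert h using 1
  · rfl
  · rfl
  · rfl
  field_simp
  ring
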